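/- Let 𝒯 be a set of k rooted phylogenetic trees and let (ℬ₁,…,ℬ_d) be a decomposition of a sub-forest 𝒜 of 𝒯. If τ₁,…,τ_d are enclosed supertrees of ℬ₁,…,ℬ_d respectively, then the tree X obtained by connecting τ₁,…,τ_d to a new common root is an enclosed supertree of 𝒜. -/

import Mathlib

/-- Rooted, unordered, leaf-labelled trees:
a tree is a single labelled leaf, or an (internal) root node with a list of subtrees
attached to it.  Being unordered, such trees are considered up to the
isomorphism `PTree.Iso` below.  The empty tree is represented by `none` in
`Option (PTree α)`. -/
inductive PTree (α : Type) : Type where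
  | leaf : α → PTree α
  | node : List (PTree α) → PTree α

namespace PTree

variable {α : Type} [DecidableEq α]

theorem sizeOf_lt_of_mem {α : Type} {c : PTree α} {cs : List (PTree α)}
    (h : c ∈ cs) : sizeOf c < sizeOf (PTree.node cs) := by
  have := List.sizeOf_lt_of_mem h
  simp only [node.sizeOf_spec]; omega

/-- `Subtree s t` : `s` is the complete subtree rooted at some node of `t`. -/
inductive Subtree : PTree α → PTree α → Prop where
  | refl (t : PTree α) : Subtree t t
  | child {s c : PTree α} {cs : List (PTree α)} :
      c ∈ cs → Subtree s c → Subtree s (node cs)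

/-- The list of leaf labels of a tree. -/
def labelList : PTree α → List α
  | leaf a => [a]
  | node cs => cs.attach.flatMap (fun c => labelList c.1)
decreasing_by exact sizeOf_lt_of_mem c.2

/-- The set `L(T)` of leaf labels of a tree. -/
def labels (t : PTree α) : Finset α := t.labelList.toFinset

/-- The size of a tree: the number of its leaves. -/
def treeSize (t : PTree α) : ℕ := t.labels.card

/-- The label set of a possibly empty tree. -/
def olabels : Option (PTree α) → Finset α
  | none => ∅
  | some t => t.labels

/-- Connecting a list of trees by a common root.  The empty list yields the
empty tree and a single tree yields that tree itself (no degree-two node is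
created). -/
def connect : List (PTree α) → Option (PTree α)
  | [] => none
  | [t] => some t
  | ts => some (node ts)

/-- The restriction `T|S` of `T` to a label set `S`: all leaves with labels
outside `S` are removed and all internal nodes of degree two are suppressed. -/
def restrict (S : Finset α) : PTree α → Option (PTree α)
  | leaf a => if a ∈ S then some (leaf a) else none
  | node cs => connect ((cs.attach.map (fun c => restrict S c.1)).reduceOption)
decreasing_by exact sizeOf_lt_of_mem c.2

/-- Restriction of a possibly empty tree. -/
def orestrict (S : Finset α) (t : Option (PTree α)) : Option (PTree α) :=
  t.bind (restrict S)

/-- Isomorphism (equality) of unordered leaf-labelled trees: equality of trees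
up to reordering of the children of each node. -/
inductive Iso : PTree α → PTree α → Prop where
  | leaf (a : α) : Iso (leaf a) (leaf a)
  | node {cs ds ds' : List (PTree α)} :
      List.Forall₂ Iso cs ds' → ds'.Perm ds → Iso (node cs) (node ds)

/-- One edge contraction: the edge between a node and one of its (internal)
children is contracted, merging the child into the parent. -/
inductive Contract : PTree α → PTree α → Prop where
  | top (l r ds : List (PTree α)) :
      Contract (node (l ++ node ds :: r)) (node (l ++ ds ++ r))
  | child {c c' : PTree α} (l r : List (PTree α)) :
      Contract c c' → Contract (node (l ++ c :: r)) (node (l ++ c' :: r))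

/-- `T` refines `T'` (written `T ⊵ T'`): `T'` can be obtained (as an
unordered tree) by contracting some edges of `T`. -/
def Refines (t t' : PTree α) : Prop :=
  ∃ u, Relation.ReflTransGen Contract t u ∧ Iso u t'

/-- Refinement of possibly empty trees. -/
def ORefines : Option (PTree α) → Option (PTree α) → Prop
  | none, none => True
  | some a, some b => Refines a b
  | _, _ => False

/-- Isomorphism (equality) of possibly empty unordered trees. -/
def OIso : Option (PTree α) → Option (PTree α) → Prop
  | none, none => True
  | some a, some b => Iso a b
  | _, _ => False

/-- A possibly empty tree is (empty or) a complete subtree of `T`. -/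
def OSubtree (T : PTree α) : Option (PTree α) → Prop
  | none => True
  | some t => Subtree t T

/-- No internal node of degree two (after the usual suppression convention):
every internal node of the rooted tree has at least two children. -/
def NoUnaryNodes (T : PTree α) : Prop :=
  ∀ cs : List (PTree α), Subtree (node cs) T → 2 ≤ cs.length

/-- Every node of the rooted tree has degree at most `D` (the degree of the
root is its number of children; the degree of any other internal node is its
number of children plus one). -/
def DegLE (D : ℕ) (T : PTree α) : Prop :=
  (∀ cs : List (PTree α), T = node cs → cs.length ≤ D) ∧
  (∀ cs : List (PTree α), Subtree (node cs) T → node cs ≠ T → cs.length + 1 ≤ D)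

/-- A rooted tree is binary if every internal node has exactly two children. -/
def Binary (T : PTree α) : Prop :=
  ∀ cs : List (PTree α), Subtree (node cs) T → cs.length = 2

/-- A cut-subtree of `T`: the empty tree, or the tree obtained by selecting
some (at least one) of the subtrees attached to an internal node of `T` and
connecting those subtrees by a common root. -/
def IsCutSubtree (T : PTree α) (a : Option (PTree α)) : Prop :=
  a = none ∨ ∃ cs sel : List (PTree α),
    Subtree (node cs) T ∧ sel.Sublist cs ∧ sel ≠ [] ∧ a = connect sel

variable {k : ℕ}

/-- A cut-subforest of `𝒯`: each component is a cut-subtree of the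
corresponding tree, and at least one component is nonempty. -/
def IsCutSubforest (𝒯 : Fin k → PTree α) (A : Fin k → Option (PTree α)) : Prop :=
  (∀ i, IsCutSubtree (𝒯 i) (A i)) ∧ ∃ i, A i ≠ none

/-- A sub-forest of `𝒯`: each component is the empty tree or a complete
subtree rooted at some node of the corresponding tree, and at least one
component is nonempty. -/
def IsSubForest (𝒯 : Fin k → PTree α) (A : Fin k → Option (PTree α)) : Prop :=
  (∀ i, OSubtree (𝒯 i) (A i)) ∧ ∃ i, A i ≠ none

/-- The set of all labels occurring in the trees of `𝒯`. -/
def allLabels (𝒯 : Fin k → PTree α) : Finset α :=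
  Finset.univ.biUnion fun i => (𝒯 i).labels

/-- A (cut-sub)forest is terminal if each component is the empty tree or a
single leaf of the corresponding tree. -/
def IsTerminal (𝒯 : Fin k → PTree α) (A : Fin k → Option (PTree α)) : Prop :=
  ∀ i, A i = none ∨ ∃ a : α, A i = some (leaf a) ∧ Subtree (leaf a) (𝒯 i)

/-- `Λ(𝒜) = { l ∈ ⋃_j L(𝒜⁽ʲ⁾) ∣ ∀ i, l ∉ L(𝒯⁽ⁱ⁾) − L(𝒜⁽ⁱ⁾) }`. -/
def lambdaSet (𝒯 : Fin k → PTree α) (A : Fin k → Option (PTree α)) : Finset α :=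
  (Finset.univ.biUnion fun j => olabels (A j)).filter
    fun l => ∀ i, l ∉ (𝒯 i).labels \ olabels (A i)

/-- `Y` is a compatible supertree of the forest `A`:
`Y|L(A⁽ⁱ⁾) ⊵ A⁽ⁱ⁾|L(Y)` for every `i`. -/
def IsCompatibleSupertree (A : Fin k → Option (PTree α)) (Y : PTree α) : Prop :=
  ∀ i, ORefines (restrict (olabels (A i)) Y) (orestrict Y.labels (A i))

/-- `X` is an agreement supertree of the forest `A`:
`X|L(A⁽ⁱ⁾) = A⁽ⁱ⁾|L(X)` (as unordered trees) for every `i`. -/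
def IsAgreementSupertree (A : Fin k → Option (PTree α)) (X : PTree α) : Prop :=
  ∀ i, OIso (restrict (olabels (A i)) X) (orestrict X.labels (A i))

/-- An embedded supertree of a cut-subforest `A` of `𝒯`: a distinctly
leaf-labelled compatible supertree `Y` of `A`, with leaves labelled by labels
of `𝒯`, such that `L(Y) ∩ L(𝒯⁽ⁱ⁾) ⊆ L(A⁽ⁱ⁾)` for all `i`. -/
def IsEmbeddedSupertree (𝒯 : Fin k → PTree α) (A : Fin k → Option (PTree α))
    (Y : PTree α) : Prop :=
  Y.labelList.Nodup ∧ Y.labels ⊆ allLabels 𝒯 ∧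
  IsCompatibleSupertree A Y ∧
  ∀ i, Y.labels ∩ (𝒯 i).labels ⊆ olabels (A i)

/-- An enclosed supertree of a sub-forest `A` of `𝒯`: a distinctly
leaf-labelled agreement supertree `X` of `A`, with leaves labelled by labels
of `𝒯`, such that `L(X) ∩ L(𝒯⁽ⁱ⁾) ⊆ L(A⁽ⁱ⁾)` for all `i`. -/
def IsEnclosedSupertree (𝒯 : Fin k → PTree α) (A : Fin k → Option (PTree α))
    (X : PTree α) : Prop :=
  X.labelList.Nodup ∧ X.labels ⊆ allLabels 𝒯 ∧
  IsAgreementSupertree A X ∧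
  ∀ i, X.labels ∩ (𝒯 i).labels ⊆ olabels (A i)

/-- `mcsp 𝒯 A` : the maximum size of an embedded supertree of `A`. -/
noncomputable def mcsp (𝒯 : Fin k → PTree α) (A : Fin k → Option (PTree α)) : ℕ :=
  sSup {m : ℕ | ∃ Y : PTree α, IsEmbeddedSupertree 𝒯 A Y ∧ m = Y.treeSize}

/-- `masp 𝒯 A` : the maximum size of an enclosed supertree of `A`. -/
noncomputable def masp (𝒯 : Fin k → PTree α) (A : Fin k → Option (PTree α)) : ℕ :=
  sSup {m : ℕ | ∃ X : PTree α, IsEnclosedSupertree 𝒯 A X ∧ m = X.treeSize}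

end PTree

/-- `ListSplit s l r` : the list `s` is partitioned into the two
(complementary) sublists `l` and `r`. -/
inductive ListSplit {β : Type} : List β → List β → List β → Prop where
  | nil : ListSplit [] [] []
  | left {s l r : List β} (x : β) : ListSplit s l r → ListSplit (x :: s) (x :: l) r
  | right {s l r : List β} (x : β) : ListSplit s l r → ListSplit (x :: s) l (x :: r)

namespace PTree

variable {α : Type} [DecidableEq α] {k : ℕ}

/-- `(AL, AR)` is a bipartite of the forest `A`: for every `i` the set of
subtrees attached to the root of `A⁽ⁱ⁾` is partitioned into two sets, each of
which is connected by a common root to form `AL⁽ⁱ⁾` resp. `AR⁽ⁱ⁾` (an empty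
set of subtrees yielding the empty tree). -/
def IsBipartite (A AL AR : Fin k → Option (PTree α)) : Prop :=
  ∀ i, ∃ s sL sR : List (PTree α),
    A i = connect s ∧ ListSplit s sL sR ∧ AL i = connect sL ∧ AR i = connect sR

/-- Condition, at one component, for `(b 1, …, b d)` to decompose `a`:
either exactly one `b j` is isomorphic to `a` and the others are empty, or at
least two of the `b j` are nonempty and the nonempty ones are isomorphic to
pairwise distinct subtrees attached to the root of `a`. -/
def DecompAt {d : ℕ} (a : Option (PTree α)) (b : Fin d → Option (PTree α)) : Prop :=
  (∃ j, OIso (b j) a ∧ ∀ j', j' ≠ j → b j' = none) ∨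
  (∃ cs : List (PTree α), a = some (node cs) ∧
    2 ≤ (Finset.univ.filter fun j => (b j).isSome).card ∧
    ∃ idx : Fin d → Option (Fin cs.length),
      (∀ j, b j = none ↔ idx j = none) ∧
      (∀ j t m, b j = some t → idx j = some m → Iso t (cs.get m)) ∧
      (∀ j j' m, idx j = some m → idx j' = some m → j = j'))

/-- `(B 1, …, B d)` is a decomposition of the forest `A` (each `B j` being a
possibly empty sub-forest of `𝒯`). -/
def IsDecomposition (𝒯 : Fin k → PTree α) (A : Fin k → Option (PTree α))
    (d : ℕ) (B : Fin d → Fin k → Option (PTree α)) : Prop :=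
  2 ≤ d ∧ (∀ j i, OSubtree (𝒯 i) (B j i)) ∧ ∀ i, DecompAt (A i) fun j => B j i

/-- The root of the (nonempty) cut-subtree `a` is an internal node of `T`,
i.e. `a` is the complete subtree of `T` rooted at an internal node of `T`. -/
def InternalRooted (T : PTree α) : Option (PTree α) → Prop
  | none => False
  | some t => (∃ cs : List (PTree α), t = node cs) ∧ Subtree t T

/-- One rerooting step: the root is moved to an adjacent internal node. -/
inductive Reroot1 : PTree α → PTree α → Prop where
  | step (l r ds : List (PTree α)) :
      Reroot1 (node (l ++ node ds :: r)) (node (ds ++ [node (l ++ r)]))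

/-- `F` is a rooted variant of the unrooted tree (represented by) `T`:
`F` is obtained by rooting `T` at some internal node. -/
def RootedVariant (T F : PTree α) : Prop := Relation.ReflTransGen Reroot1 T F

/-- A maximal subtree of the unrooted tree (represented by) `T`: a rooted tree
obtained by first rooting `T` at some internal node and then removing at most
one nontrivial subtree attached to that node. -/
def IsMaximalSubtree (T A : PTree α) : Prop :=
  ∃ cs : List (PTree α), RootedVariant T (node cs) ∧
    (A = node cs ∨ ∃ l r ds : List (PTree α), cs = l ++ node ds :: r ∧ A = node (l ++ r))

/-- `T` (a rooted tree, rooted at an internal node) represents an unrooted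
tree without vertices of degree two: the root has at least three neighbours
and every other internal vertex has at least three neighbours as well. -/
def IsUnrootedRep (T : PTree α) : Prop :=
  (∃ cs : List (PTree α), T = node cs ∧ 3 ≤ cs.length) ∧
  ∀ cs : List (PTree α), Subtree (node cs) T → node cs ≠ T → 2 ≤ cs.length

end PTree
namespace PTree

variable {α : Type} [DecidableEq α]

theorem restrict_leaf (S : Finset α) (a : α) :
    restrict S (leaf a) = if a ∈ S then some (leaf a) else none := by
  rw [restrict]

theorem restrict_node (S : Finset α) (cs : List (PTree α)) :
    restrict S (node cs) = connect ((cs.map (restrict S)).reduceOption) := by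
  rw [restrict, List.attach_map_val (l := cs) (f := restrict S)]

theorem labelList_leaf (a : α) : labelList (leaf a) = [a] := by rw [labelList]

theorem labelList_node (cs : List (PTree α)) :
    labelList (node cs) = cs.flatMap labelList := by
  rw [labelList]
  rw [List.flatMap, List.flatMap, List.attach_map_val (l := cs) (f := labelList)]

theorem mem_labels {x : α} {t : PTree α} : x ∈ labels t ↔ x ∈ labelList t :=
  List.mem_toFinset

theorem mem_labels_node {x : α} {cs : List (PTree α)} :
    x ∈ labels (node cs) ↔ ∃ c ∈ cs, x ∈ labels c := by
  simp [labels, labelList_node, List.mem_flatMap]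

theorem connect_nil : connect ([] : List (PTree α)) = none := rfl
theorem connect_singleton (t : PTree α) : connect [t] = some t := rfl
theorem connect_cons_cons (a b : PTree α) (l : List (PTree α)) :
    connect (a :: b :: l) = some (node (a :: b :: l)) := rfl
theorem connect_toList (o : Option (PTree α)) : connect o.toList = o := by
  cases o <;> rfl

theorem olabels_some (t : PTree α) : olabels (some t) = labels t := rfl
theorem olabels_none : olabels (none : Option (PTree α)) = ∅ := rfl
theorem orestrict_some (S : Finset α) (t : PTree α) :
    orestrict S (some t) = restrict S t := rfl
theorem orestrict_none (S : Finset α) : orestrict S (none : Option (PTree α)) = none := rfl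

theorem oiso_none_none : OIso (none : Option (PTree α)) none := trivial
theorem oiso_some_some {a b : PTree α} : OIso (some a) (some b) ↔ Iso a b := Iff.rfl
theorem not_oiso_none_some {b : PTree α} (h : OIso none (some b)) : False := h
theorem not_oiso_some_none {a : PTree α} (h : OIso (some a) none) : False := h

end PTree
set_option linter.unusedSectionVars false

namespace PTree

variable {α : Type} [DecidableEq α]

theorem iso_refl : ∀ (t : PTree α), Iso t t
  | leaf a => .leaf a
  | node cs => .node (List.forall₂_same.mpr fun c hc => iso_refl c) (List.Perm.refl cs)
decreasing_by exact sizeOf_lt_of_mem hc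

theorem forall₂_perm_left {β γ : Type} {R : β → γ → Prop} :
    ∀ {l₁ l₂ : List β}, l₁.Perm l₂ → ∀ {l₃ : List γ}, List.Forall₂ R l₂ l₃ →
      ∃ l₀, List.Forall₂ R l₁ l₀ ∧ l₀.Perm l₃ := by
  intro l₁ l₂ hp
  induction hp with
  | nil =>
    intro l₃ h; cases h; exact ⟨[], .nil, .nil⟩
  | cons x p ih =>
    intro l₃ h
    cases h with
    | cons hr h' =>
      obtain ⟨l₀, hf, hperm⟩ := ih h'
      exact ⟨_ :: l₀, .cons hr hf, hperm.cons _⟩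
  | swap x y l =>
    intro l₃ h
    cases h with
    | cons h1 h' =>
      cases h' with
      | cons h2 h'' =>
        exact ⟨_ :: _ :: _, .cons h2 (.cons h1 h''), List.Perm.swap _ _ _⟩
  | trans p₁ p₂ ih₁ ih₂ =>
    intro l₃ h
    obtain ⟨l₀, hf, hperm⟩ := ih₂ h
    obtain ⟨l₀', hf', hperm'⟩ := ih₁ hf
    exact ⟨l₀', hf', hperm'.trans hperm⟩

theorem forall₂_imp_mem {β γ : Type} {R S : β → γ → Prop} :
    ∀ {l₁ : List β} {l₂ : List γ}, (∀ c ∈ l₁, ∀ d, R c d → S c d) →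
      List.Forall₂ R l₁ l₂ → List.Forall₂ S l₁ l₂ := by
  intro l₁ l₂ hI h
  induction h with
  | nil => exact .nil
  | cons h hs ih =>
    exact .cons (hI _ (List.mem_cons_self) _ h)
      (ih fun c hc d hr => hI c (List.mem_cons_of_mem _ hc) d hr)

theorem forall₂_comp {β : Type} {R : β → β → Prop} :
    ∀ {l₁ l₂ l₃ : List β}, (∀ c ∈ l₁, ∀ u v, R c u → R u v → R c v) →
      List.Forall₂ R l₁ l₂ → List.Forall₂ R l₂ l₃ → List.Forall₂ R l₁ l₃ := by
  intro l₁ l₂ l₃ hI h₁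
  induction h₁ generalizing l₃ with
  | nil => intro h₂; cases h₂; exact .nil
  | cons h hs ih =>
    intro h₂
    cases h₂ with
    | cons h' hs' =>
      exact .cons (hI _ (List.mem_cons_self) _ _ h h')
        (ih (fun c hc => hI c (List.mem_cons_of_mem _ hc)) hs')

theorem iso_trans : ∀ (t : PTree α) {u v : PTree α}, Iso t u → Iso u v → Iso t v
  | leaf _, _, _, h₁, h₂ => by cases h₁; exact h₂
  | node cs, u, v, h₁, h₂ => by
    have IH : ∀ c ∈ cs, ∀ u v : PTree α, Iso c u → Iso u v → Iso c v :=
      fun c hc u v h1 h2 => iso_trans c h1 h2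
    cases h₁ with
    | node hf₁ hp₁ =>
      cases h₂ with
      | node hf₂ hp₂ =>
        obtain ⟨l₀, hf, hperm⟩ := forall₂_perm_left hp₁ hf₂
        exact Iso.node (forall₂_comp IH hf₁ hf) (hperm.trans hp₂)
decreasing_by exact sizeOf_lt_of_mem hc

theorem oiso_refl : ∀ (o : Option (PTree α)), OIso o o
  | none => trivial
  | some t => iso_refl t

theorem oiso_trans : ∀ {a b c : Option (PTree α)}, OIso a b → OIso b c → OIso a c
  | none, none, none, _, _ => trivial
  | some _, some _, some _, h₁, h₂ => iso_trans _ h₁ h₂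
  | none, some _, _, h₁, _ => h₁.elim
  | some _, none, _, h₁, _ => h₁.elim
  | some _, some _, none, _, h₂ => h₂.elim
  | none, none, some _, _, h₂ => h₂.elim

theorem iso_labelList_perm : ∀ (t : PTree α) {u : PTree α}, Iso t u →
    t.labelList.Perm u.labelList
  | leaf _, _, h => by cases h; exact .refl _
  | node cs, u, h => by
    have IH : ∀ c ∈ cs, ∀ u : PTree α, Iso c u → c.labelList.Perm u.labelList :=
      fun c hc u => iso_labelList_perm c
    cases h with
    | @node _ ds ds' hf hp =>
      rw [labelList_node, labelList_node]
      have h1 : (cs.flatMap labelList).Perm (ds'.flatMap labelList) := by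
        rw [List.flatMap, List.flatMap]
        apply List.Perm.flatten_congr
        rw [List.forall₂_map_right_iff, List.forall₂_map_left_iff]
        exact forall₂_imp_mem (fun c hc d h' => IH c hc d h') hf
      exact h1.trans (hp.flatMap_right labelList)
decreasing_by exact sizeOf_lt_of_mem hc

theorem labels_iso {t u : PTree α} (h : Iso t u) : labels t = labels u :=
  List.toFinset_eq_of_perm _ _ (iso_labelList_perm t h)

theorem olabels_oiso : ∀ {a b : Option (PTree α)}, OIso a b → olabels a = olabels b
  | none, none, _ => rfl
  | some _, some _, h => labels_iso h
  | none, some _, h => h.elim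
  | some _, none, h => h.elim

theorem subtree_labels_subset {s T : PTree α} (h : Subtree s T) : labels s ⊆ labels T := by
  induction h with
  | refl => exact subset_rfl
  | child hc _ ih => exact ih.trans fun x hx => mem_labels_node.mpr ⟨_, hc, hx⟩

theorem subtree_labelList_nodup {s T : PTree α} (h : Subtree s T)
    (hn : T.labelList.Nodup) : s.labelList.Nodup := by
  induction h with
  | refl => exact hn
  | @child c cs hmem hst ih =>
    apply ih
    have hsub : c.labelList.Sublist (node cs).labelList := by
      rw [labelList_node, List.flatMap]
      exact List.sublist_flatten_of_mem (List.mem_map_of_mem hmem)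
    exact hsub.nodup hn

theorem children_labels_disjoint {cs : List (PTree α)} (h : (node cs).labelList.Nodup)
    {m m' : ℕ} (hm : m < cs.length) (hm' : m' < cs.length) (hne : m ≠ m') {x : α}
    (h1 : x ∈ labels cs[m]) (h2 : x ∈ labels cs[m']) : False := by
  rw [labelList_node, List.nodup_flatMap] at h
  have hp := h.2
  rw [List.pairwise_iff_getElem] at hp
  rw [mem_labels] at h1 h2
  rcases Nat.lt_or_ge m m' with hlt | hge
  · exact hp m m' hm hm' hlt h1 h2
  · exact hp m' m hm' hm (by omega) h2 h1

end PTree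
namespace PTree

variable {α : Type} [DecidableEq α]

theorem reduceOption_all_none {β : Type} :
    ∀ (l : List (Option β)), (∀ x ∈ l, x = none) → l.reduceOption = [] := by
  intro l h
  induction l with
  | nil => rfl
  | cons a l ih =>
    have := h a (List.mem_cons_self)
    subst this
    rw [List.reduceOption_cons_of_none]
    exact ih fun x hx => h x (List.mem_cons_of_mem _ hx)

theorem restrict_eq_none : ∀ (t : PTree α) {S : Finset α},
    (∀ x ∈ labels t, x ∉ S) → restrict S t = none
  | leaf a, S, h => by
    rw [restrict_leaf, if_neg]
    exact h a (by simp [labels, labelList_leaf])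
  | node cs, S, h => by
    rw [restrict_node]
    have h1 : cs.map (restrict S) = cs.map (fun _ => none) :=
      List.map_congr_left fun c hc =>
        restrict_eq_none c fun x hx => h x (mem_labels_node.mpr ⟨c, hc, hx⟩)
    rw [h1, reduceOption_all_none _ (by simp), connect_nil]
decreasing_by exact sizeOf_lt_of_mem hc

theorem restrict_congr : ∀ (t : PTree α) {S S' : Finset α},
    (∀ x ∈ labels t, (x ∈ S ↔ x ∈ S')) → restrict S t = restrict S' t
  | leaf a, S, S', h => by
    rw [restrict_leaf, restrict_leaf]
    have := h a (by simp [labels, labelList_leaf])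
    simp only [this]
  | node cs, S, S', h => by
    rw [restrict_node, restrict_node]
    have h1 : cs.map (restrict S) = cs.map (restrict S') :=
      List.map_congr_left fun c hc =>
        restrict_congr c fun x hx => h x (mem_labels_node.mpr ⟨c, hc, hx⟩)
    rw [h1]
decreasing_by exact sizeOf_lt_of_mem hc

theorem forall₂_reduceOption {l₁ l₂ : List (Option (PTree α))}
    (h : List.Forall₂ OIso l₁ l₂) :
    List.Forall₂ Iso l₁.reduceOption l₂.reduceOption := by
  induction h with
  | nil => exact .nil
  | @cons a b l₁' l₂' hab h ih =>
    match a, b, hab with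
    | none, none, _ =>
      rw [List.reduceOption_cons_of_none, List.reduceOption_cons_of_none]; exact ih
    | some x, some y, hxy =>
      rw [List.reduceOption_cons_of_some, List.reduceOption_cons_of_some]
      exact .cons hxy ih
    | none, some _, hab => exact hab.elim
    | some _, none, hab => exact hab.elim

theorem reduceOption_perm {l₁ l₂ : List (Option (PTree α))} (h : l₁.Perm l₂) :
    l₁.reduceOption.Perm l₂.reduceOption := by
  simpa [List.reduceOption] using h.filterMap id

theorem connect_oiso {xs ys' ys : List (PTree α)} (hf : List.Forall₂ Iso xs ys')
    (hp : ys'.Perm ys) : OIso (connect xs) (connect ys) := by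
  have hl : xs.length = ys.length := hf.length_eq.trans hp.length_eq
  match xs, ys with
  | [], [] => exact trivial
  | [x], [y] =>
    have h1 : ys' = [y] := List.perm_singleton.mp hp
    subst h1
    cases hf with
    | cons h _ => exact h
  | a :: b :: l, c :: e :: m =>
    rw [connect_cons_cons, connect_cons_cons]
    exact Iso.node hf hp
  | [], _ :: _ => simp at hl
  | _ :: _, [] => simp at hl
  | [_], _ :: _ :: _ => simp at hl
  | _ :: _ :: _, [_] => simp at hl

theorem restrict_iso : ∀ (t : PTree α) {u : PTree α} (S : Finset α), Iso t u →
    OIso (restrict S t) (restrict S u)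
  | leaf _, _, S, h => by cases h; exact oiso_refl _
  | node cs, u, S, h => by
    have IH : ∀ c ∈ cs, ∀ u : PTree α, Iso c u → OIso (restrict S c) (restrict S u) :=
      fun c hc u h' => restrict_iso c S h'
    cases h with
    | @node _ ds ds' hf hp =>
      rw [restrict_node, restrict_node]
      apply connect_oiso (ys' := (ds'.map (restrict S)).reduceOption)
      · apply forall₂_reduceOption
        rw [List.forall₂_map_right_iff, List.forall₂_map_left_iff]
        exact forall₂_imp_mem (fun c hc d h' => IH c hc d h') hf
      · exact reduceOption_perm (hp.map (restrict S))
decreasing_by exact sizeOf_lt_of_mem hc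

theorem filterMap_eq_of_sublist {β γ : Type} (g : β → Option γ) :
    ∀ {l L : List β}, l.Sublist L → L.Nodup → (∀ x ∈ L, x ∉ l → g x = none) →
      List.filterMap g l = List.filterMap g L := by
  intro l L hsub
  induction hsub with
  | slnil => intro _ _; rfl
  | @cons l' L' x h ih =>
    intro hn hnone
    rw [List.filterMap_cons]
    have hx : g x = none := by
      apply hnone x (List.mem_cons_self)
      intro hmem
      exact (List.nodup_cons.mp hn).1 (h.subset hmem)
    rw [hx]
    exact ih (List.nodup_cons.mp hn).2 fun y hy hyl =>
      hnone y (List.mem_cons_of_mem _ hy) hyl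
  | @cons_cons l' L' x h ih =>
    intro hn hnone
    rw [List.filterMap_cons, List.filterMap_cons]
    have heq : List.filterMap g l' = List.filterMap g L' := by
      apply ih (List.nodup_cons.mp hn).2
      intro y hy hyl
      apply hnone y (List.mem_cons_of_mem _ hy)
      intro hmem
      rcases List.mem_cons.mp hmem with rfl | hmem'
      · exact (List.nodup_cons.mp hn).1 hy
      · exact hyl hmem'
    rw [heq]

theorem reduceOption_ofFn {β : Type} {n : ℕ} (f : Fin n → Option β) :
    (List.ofFn f).reduceOption = List.filterMap f (List.finRange n) := by
  rw [List.ofFn_eq_map]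
  simp [List.reduceOption, List.filterMap_map, Function.id_comp]

theorem perm_filterMap_of_idx {β : Type} {n dd : ℕ} (g : Fin n → Option β)
    (idx : Fin dd → Option (Fin n))
    (hinj : ∀ j j' m, idx j = some m → idx j' = some m → j = j')
    (hoff : ∀ m : Fin n, (∀ j, idx j ≠ some m) → g m = none) :
    (List.filterMap (fun j => (idx j).bind g) (List.finRange dd)).Perm
      (List.filterMap g (List.finRange n)) := by
  rw [← List.filterMap_filterMap (f := idx) (g := g)]
  set S := List.filterMap idx (List.finRange dd) with hS
  have hSnodup : S.Nodup :=
    List.Nodup.filterMap (fun a a' b hb hb' => hinj a a' b hb hb') (List.nodup_finRange dd)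
  obtain ⟨l, hl, hsub⟩ := hSnodup.subperm (fun x _ => List.mem_finRange x)
  have heq : List.filterMap g l = List.filterMap g (List.finRange n) := by
    apply filterMap_eq_of_sublist g hsub (List.nodup_finRange n)
    intro m _ hml
    apply hoff
    intro j hj
    exact hml (hl.mem_iff.mpr (by
      rw [hS]; exact List.mem_filterMap.mpr ⟨j, List.mem_finRange j, hj⟩))
  exact ((hl.filterMap g).symm).trans (heq ▸ List.Perm.refl _)

theorem filterMap_single {β γ : Type} (f : β → Option γ) (j0 : β) :
    ∀ (l : List β), l.Nodup → j0 ∈ l → (∀ j ∈ l, j ≠ j0 → f j = none) →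
      List.filterMap f l = (f j0).toList := by
  intro l
  induction l with
  | nil => intro _ h; exact absurd h List.not_mem_nil
  | cons a l ih =>
    intro hn hmem hnone
    rw [List.filterMap_cons]
    rcases List.mem_cons.mp hmem with rfl | hmem'
    · have hrest : List.filterMap f l = [] := by
        rw [List.filterMap_eq_nil_iff]
        intro x hx
        exact hnone x (List.mem_cons_of_mem _ hx)
          (fun h => (List.nodup_cons.mp hn).1 (h ▸ hx))
      rw [hrest]
      cases h : f j0 <;> simp [h]
    · have ha : f a = none := hnone a (List.mem_cons_self)
        (fun h => (List.nodup_cons.mp hn).1 (h ▸ hmem'))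
      rw [ha]
      exact ih (List.nodup_cons.mp hn).2 hmem'
        fun j hj => hnone j (List.mem_cons_of_mem _ hj)

end PTree
namespace PTree

variable {α : Type} [DecidableEq α]

theorem forall₂_ofFn {β γ : Type} {R : β → γ → Prop} {n : ℕ} {f : Fin n → β}
    {g : Fin n → γ} (h : ∀ j, R (f j) (g j)) :
    List.Forall₂ R (List.ofFn f) (List.ofFn g) := by
  rw [List.forall₂_iff_get]
  refine ⟨by simp, ?_⟩
  intro i h₁ h₂
  rw [List.get_eq_getElem, List.get_eq_getElem, List.getElem_ofFn, List.getElem_ofFn]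
  exact h _

theorem mem_labels_leaf {x a : α} : x ∈ labels (leaf a) ↔ x = a := by
  simp [labels, labelList_leaf]

end PTree

/-- If `(ℬ₁,…,ℬ_d)` is a decomposition of a sub-forest `𝒜`
of `𝒯` and `τ₁,…,τ_d` are enclosed supertrees of `ℬ₁,…,ℬ_d` respectively,
then the tree obtained by connecting `τ₁,…,τ_d` to a new common root is an
enclosed supertree of `𝒜`. -/
theorem maximum_agreement_supertree_stmt10
    {α : Type} [DecidableEq α] {k : ℕ} (𝒯 : Fin k → PTree α)
    (hphylo : ∀ i, (𝒯 i).labelList.Nodup)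
    (A : Fin k → Option (PTree α))
    (hA : PTree.IsSubForest 𝒯 A)
    {d : ℕ} (B : Fin d → Fin k → Option (PTree α))
    (hdec : PTree.IsDecomposition 𝒯 A d B)
    (τ : Fin d → PTree α)
    (hτ : ∀ j, PTree.IsEnclosedSupertree 𝒯 (B j) (τ j)) :
    PTree.IsEnclosedSupertree 𝒯 A (PTree.node (List.ofFn τ)) := by
  obtain ⟨hAsub, -⟩ := hA
  obtain ⟨-, hBsub, hdecomp⟩ := hdec
  have hτnodup : ∀ j, (τ j).labelList.Nodup := fun j => (hτ j).1
  have hτall : ∀ j, (τ j).labels ⊆ PTree.allLabels 𝒯 := fun j => (hτ j).2.1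
  have hτagree : ∀ j i, PTree.OIso (PTree.restrict (PTree.olabels (B j i)) (τ j))
      (PTree.orestrict (τ j).labels (B j i)) := fun j => (hτ j).2.2.1
  have hτcap : ∀ j i, (τ j).labels ∩ (𝒯 i).labels ⊆ PTree.olabels (B j i) :=
    fun j => (hτ j).2.2.2
  have hXlab : ∀ x, x ∈ (PTree.node (List.ofFn τ)).labels ↔ ∃ j, x ∈ (τ j).labels := by
    intro x
    rw [PTree.mem_labels_node]
    constructor
    · rintro ⟨c, hc, hx⟩
      obtain ⟨j, rfl⟩ := (List.mem_ofFn (f := τ) (a := c)).mp hc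
      exact ⟨j, hx⟩
    · rintro ⟨j, hx⟩
      exact ⟨τ j, (List.mem_ofFn (f := τ) (a := τ j)).mpr ⟨j, rfl⟩, hx⟩
  have hAT : ∀ i, PTree.olabels (A i) ⊆ (𝒯 i).labels := by
    intro i
    cases hAi : A i with
    | none => intro x hx; simp [PTree.olabels] at hx
    | some a =>
      have hsub : PTree.Subtree a (𝒯 i) := by have := hAsub i; rw [hAi] at this; exact this
      exact PTree.subtree_labels_subset hsub
  have hτB : ∀ j i x, x ∈ (τ j).labels → x ∈ (𝒯 i).labels → x ∈ PTree.olabels (B j i) :=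
    fun j i x h1 h2 => hτcap j i (Finset.mem_inter.mpr ⟨h1, h2⟩)
  -- structure per i
  have hBA : ∀ i j, PTree.olabels (B j i) ⊆ PTree.olabels (A i) := by
    intro i j
    rcases hdecomp i with ⟨j0, hj0, hrest⟩ | ⟨cs, hAi, -, idx, hidx1, hidx2, hidx3⟩
    · have hj0' : PTree.OIso (B j0 i) (A i) := hj0
      by_cases hjj : j = j0
      · subst hjj; rw [PTree.olabels_oiso hj0']
      · have hn : B j i = none := hrest j hjj
        rw [hn]; intro x hx; simp [PTree.olabels] at hx
    · cases hBj : B j i with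
      | none => intro x hx; simp [PTree.olabels] at hx
      | some b =>
        have hnone_iff : B j i = none ↔ idx j = none := hidx1 j
        rcases h : idx j with _ | m
        · rw [hnone_iff.mpr h] at hBj; exact absurd hBj (by simp)
        · have hiso : PTree.Iso b (cs.get m) := hidx2 j b m hBj h
          rw [PTree.olabels_some, PTree.labels_iso hiso, hAi, PTree.olabels_some]
          intro x hx
          exact PTree.mem_labels_node.mpr ⟨cs.get m, List.get_mem cs m, hx⟩
  have hBdisj : ∀ i j j', j ≠ j' → ∀ x, x ∈ PTree.olabels (B j i) →
      x ∈ PTree.olabels (B j' i) → False := by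
    intro i j j' hne x hx hx'
    rcases hdecomp i with ⟨j0, hj0, hrest⟩ | ⟨cs, hAi, -, idx, hidx1, hidx2, hidx3⟩
    · by_cases hjj : j = j0
      · subst hjj
        have hn : B j' i = none := hrest j' (Ne.symm hne)
        rw [hn] at hx'; simp [PTree.olabels] at hx'
      · have hn : B j i = none := hrest j hjj
        rw [hn] at hx; simp [PTree.olabels] at hx
    · have hnodcs : (PTree.node cs).labelList.Nodup := by
        have hsub : PTree.Subtree (PTree.node cs) (𝒯 i) := by
          have := hAsub i; rw [hAi] at this; exact this
        exact PTree.subtree_labelList_nodup hsub (hphylo i)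
      have hidx1' : ∀ j, B j i = none ↔ idx j = none := fun j => hidx1 j
      cases hBj : B j i with
      | none => rw [hBj] at hx; simp [PTree.olabels] at hx
      | some b =>
        cases hBj' : B j' i with
        | none => rw [hBj'] at hx'; simp [PTree.olabels] at hx'
        | some b' =>
          rcases h : idx j with _ | m
          · rw [(hidx1' j).mpr h] at hBj; exact absurd hBj (by simp)
          rcases h' : idx j' with _ | m'
          · rw [(hidx1' j').mpr h'] at hBj'; exact absurd hBj' (by simp)
          have hiso : PTree.Iso b (cs.get m) := hidx2 j b m hBj h
          have hiso' : PTree.Iso b' (cs.get m') := hidx2 j' b' m' hBj' h'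
          have hmm : m ≠ m' := fun hmm => hne (hidx3 j j' m h (hmm ▸ h'))
          rw [hBj, PTree.olabels_some, PTree.labels_iso hiso] at hx
          rw [hBj', PTree.olabels_some, PTree.labels_iso hiso'] at hx'
          exact PTree.children_labels_disjoint hnodcs m.2 m'.2
            (fun hh => hmm (Fin.ext hh))
            (by simpa [List.get_eq_getElem] using hx)
            (by simpa [List.get_eq_getElem] using hx')
  refine ⟨?_, ?_, ?_, ?_⟩
  · -- nodup
    rw [PTree.labelList_node, List.nodup_flatMap]
    constructor
    · intro t ht
      obtain ⟨j, rfl⟩ := (List.mem_ofFn (f := τ) (a := t)).mp ht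
      exact hτnodup j
    · rw [List.pairwise_ofFn]
      intro j j' hlt
      intro x hx hx'
      have hx1 : x ∈ (τ j).labels := PTree.mem_labels.mpr hx
      have hx2 : x ∈ (τ j').labels := PTree.mem_labels.mpr hx'
      obtain ⟨i, -, hi⟩ := Finset.mem_biUnion.mp (hτall j hx1)
      exact hBdisj i j j' (Fin.ne_of_lt hlt) x (hτB j i x hx1 hi) (hτB j' i x hx2 hi)
  · -- subset of allLabels
    intro x hx
    obtain ⟨j, hj⟩ := (hXlab x).mp hx
    exact hτall j hj
  · -- agreement
    intro i
    rcases hdecomp i with ⟨j0, hj0, hrest⟩ | ⟨cs, hAi, -, idx, hidx1, hidx2, hidx3⟩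
    · have hj0' : PTree.OIso (B j0 i) (A i) := hj0
      have hrest' : ∀ j, j ≠ j0 → B j i = none := fun j h => hrest j h
      cases hAi : A i with
      | none =>
        have hres : PTree.restrict (PTree.olabels (none : Option (PTree α)))
            (PTree.node (List.ofFn τ)) = none :=
          PTree.restrict_eq_none _ (fun x _ hx => by simp [PTree.olabels] at hx)
        rw [hres]
        exact trivial
      | some a =>
        rw [hAi] at hj0'
        cases hB0 : B j0 i with
        | none => rw [hB0] at hj0'; exact hj0'.elim
        | some b =>
          rw [hB0] at hj0'
          have hba : PTree.Iso b a := hj0'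
          have hlab_ba : b.labels = a.labels := PTree.labels_iso hba
          have haT : a.labels ⊆ (𝒯 i).labels := by
            have := hAT i; rw [hAi] at this; exact this
          have hmap : (List.ofFn τ).map (PTree.restrict (PTree.olabels (some a))) =
              List.ofFn (fun j => if j = j0 then PTree.restrict b.labels (τ j) else none) := by
            rw [List.map_ofFn]
            congr 1
            funext j
            show PTree.restrict (PTree.olabels (some a)) (τ j) = _
            rw [PTree.olabels_some]
            by_cases hjj : j = j0
            · subst hjj
              rw [if_pos rfl]
              apply PTree.restrict_congr
              intro x hx
              rw [hlab_ba]
            · rw [if_neg hjj]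
              apply PTree.restrict_eq_none
              intro x hx hxa
              have hxB := hτB j i x hx (haT hxa)
              rw [hrest' j hjj] at hxB
              simp [PTree.olabels] at hxB
          rw [PTree.orestrict_some, PTree.restrict_node, hmap, PTree.reduceOption_ofFn]
          rw [PTree.filterMap_single _ j0 (List.finRange d) (List.nodup_finRange d)
            (List.mem_finRange j0) (fun j _ hj => if_neg hj)]
          rw [if_pos rfl, PTree.connect_toList]
          -- OIso (restrict b.labels (τ j0)) (restrict X.labels a)
          have s1 : PTree.OIso (PTree.restrict b.labels (τ j0))
              (PTree.restrict (τ j0).labels b) := by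
            have := hτagree j0 i; rw [hB0] at this; exact this
          have s2 : PTree.OIso (PTree.restrict (τ j0).labels b)
              (PTree.restrict (τ j0).labels a) := PTree.restrict_iso b _ hba
          have s3 : PTree.restrict (τ j0).labels a =
              PTree.restrict (PTree.node (List.ofFn τ)).labels a := by
            apply PTree.restrict_congr
            intro x hx
            constructor
            · intro hxj; exact (hXlab x).mpr ⟨j0, hxj⟩
            · intro hX
              obtain ⟨j, hj⟩ := (hXlab x).mp hX
              by_cases hjj : j = j0
              · exact hjj ▸ hj
              · have hxB := hτB j i x hj (haT hx)
                rw [hrest' j hjj] at hxB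
                simp [PTree.olabels] at hxB
          exact PTree.oiso_trans s1 (s3 ▸ s2)
    · -- case (ii)
      have hidx1' : ∀ j, B j i = none ↔ idx j = none := fun j => hidx1 j
      have hTsub : PTree.Subtree (PTree.node cs) (𝒯 i) := by
        have := hAsub i; rw [hAi] at this; exact this
      have hnodcs : (PTree.node cs).labelList.Nodup :=
        PTree.subtree_labelList_nodup hTsub (hphylo i)
      have hcsT : (PTree.node cs).labels ⊆ (𝒯 i).labels :=
        PTree.subtree_labels_subset hTsub
      have hsome : ∀ j b, B j i = some b → ∃ m, idx j = some m ∧ PTree.Iso b (cs.get m) := by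
        intro j b hb
        rcases h : idx j with _ | m
        · rw [(hidx1' j).mpr h] at hb; exact absurd hb (by simp)
        · exact ⟨m, rfl, hidx2 j b m hb h⟩
      have hloc : ∀ j (m : Fin cs.length) x, x ∈ (τ j).labels →
          x ∈ PTree.labels (cs.get m) → idx j = some m := by
        intro j m x hxj hxm
        have hxT : x ∈ (𝒯 i).labels :=
          hcsT (PTree.mem_labels_node.mpr ⟨_, List.get_mem cs m, hxm⟩)
        have hxB := hτB j i x hxj hxT
        cases hb : B j i with
        | none => rw [hb] at hxB; simp [PTree.olabels] at hxB
        | some b =>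
          obtain ⟨m', hm', hiso⟩ := hsome j b hb
          rw [hb, PTree.olabels_some] at hxB
          have hxm' : x ∈ PTree.labels (cs.get m') := by
            rw [← PTree.labels_iso hiso]; exact hxB
          by_cases hmm : m' = m
          · exact hmm ▸ hm'
          · exact (PTree.children_labels_disjoint hnodcs m'.2 m.2
              (fun hh => hmm (Fin.ext hh))
              (by simpa [List.get_eq_getElem] using hxm')
              (by simpa [List.get_eq_getElem] using hxm)).elim
      rw [hAi, PTree.olabels_some, PTree.orestrict_some,
        PTree.restrict_node, PTree.restrict_node, List.map_ofFn]
      have hcsmap : cs.map (PTree.restrict (PTree.node (List.ofFn τ)).labels) =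
          List.ofFn (fun m : Fin cs.length =>
            PTree.restrict (PTree.node (List.ofFn τ)).labels (cs.get m)) := by
        conv_lhs => rw [← List.ofFn_getElem (xs := cs)]
        rw [List.map_ofFn]
        rfl
      rw [hcsmap]
      apply PTree.connect_oiso
        (ys' := (List.ofFn (fun j => (idx j).bind (fun m =>
          PTree.restrict (PTree.node (List.ofFn τ)).labels (cs.get m)))).reduceOption)
      · apply PTree.forall₂_reduceOption
        apply PTree.forall₂_ofFn
        intro j
        cases hb : B j i with
        | none =>
          have hidxn : idx j = none := (hidx1' j).mp hb
          rw [hidxn]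
          have hres : PTree.restrict (PTree.node cs).labels (τ j) = none := by
            apply PTree.restrict_eq_none
            intro x hx hxcs
            have := hτB j i x hx (hcsT hxcs)
            rw [hb] at this; simp [PTree.olabels] at this
          show PTree.OIso (PTree.restrict (PTree.node cs).labels (τ j)) none
          rw [hres]; exact trivial
        | some b =>
          obtain ⟨m, hm, hiso⟩ := hsome j b hb
          rw [hm]
          show PTree.OIso (PTree.restrict (PTree.node cs).labels (τ j))
            (PTree.restrict (PTree.node (List.ofFn τ)).labels (cs.get m))
          have e1 : PTree.restrict (PTree.node cs).labels (τ j) =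
              PTree.restrict b.labels (τ j) := by
            apply PTree.restrict_congr
            intro x hx
            constructor
            · intro hxcs
              have := hτB j i x hx (hcsT hxcs)
              rw [hb, PTree.olabels_some] at this; exact this
            · intro hxb
              have hxm : x ∈ PTree.labels (cs.get m) := by
                rw [← PTree.labels_iso hiso]; exact hxb
              exact PTree.mem_labels_node.mpr ⟨_, List.get_mem cs m, hxm⟩
          have e2 : PTree.restrict (τ j).labels (cs.get m) =
              PTree.restrict (PTree.node (List.ofFn τ)).labels (cs.get m) := by
            apply PTree.restrict_congr
            intro x hx
            constructor
            · intro hxj; exact (hXlab x).mpr ⟨j, hxj⟩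
            · intro hX
              obtain ⟨j', hj'⟩ := (hXlab x).mp hX
              have hjj : j' = j := hidx3 j' j m (hloc j' m x hj' hx) hm
              exact hjj ▸ hj'
          rw [e1, ← e2]
          have s1 : PTree.OIso (PTree.restrict b.labels (τ j))
              (PTree.restrict (τ j).labels b) := by
            have := hτagree j i; rw [hb] at this; exact this
          exact PTree.oiso_trans s1 (PTree.restrict_iso b _ hiso)
      · rw [PTree.reduceOption_ofFn, PTree.reduceOption_ofFn]
        apply PTree.perm_filterMap_of_idx _ idx (fun j j' m h h' => hidx3 j j' m h h')
        intro m hm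
        apply PTree.restrict_eq_none
        intro x hx hxX
        obtain ⟨j, hxj⟩ := (hXlab x).mp hxX
        exact hm j (hloc j m x hxj hx)
  · -- cap
    intro i x hx
    rw [Finset.mem_inter] at hx
    obtain ⟨j, hj⟩ := (hXlab x).mp hx.1
    exact hBA i j (hτB j i x hj hx.2)
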